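/- There exist sets A, B ⊆ ℕ such that B is 1-reducible to A but B is not coarsely reducible to A. -/

import Mathlib

open Filter

/-- A finite record of oracle query answers: a finite list of (position, bit) pairs. -/
abbrev FinInfo : Type := List (ℕ × Bool)

/-- Two finite query-answer records are compatible if they agree wherever both answer. -/
def FinInfo.Compatible (σ τ : FinInfo) : Prop :=
  ∀ p ∈ σ, ∀ q ∈ τ, p.1 = q.1 → p.2 = q.2

/-- The answers recorded in `σ` are exactly those given by the characteristic
function of the set `C`. -/
def AgreesSet (σ : FinInfo) (C : Set ℕ) : Prop :=
  ∀ p ∈ σ, (p.2 = true ↔ p.1 ∈ C)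

/-- The answers recorded in `σ` are all given by the partial oracle `g`. -/
def AgreesPart (σ : FinInfo) (g : ℕ →. Bool) : Prop :=
  ∀ p ∈ σ, p.2 ∈ g p.1

/-- `g` is a partial oracle for the set `A`: a partial function from `ℕ` to `Bool`
agreeing with the characteristic function of `A` on its domain. -/
def IsPartialOracle (g : ℕ →. Bool) (A : Set ℕ) : Prop :=
  ∀ n b, b ∈ g n → (b = true ↔ n ∈ A)

/-- The domain of a partial oracle. -/
def pDom (g : ℕ →. Bool) : Set ℕ := {n | (g n).Dom}

/-- A Turing functional (oracle Turing machine program), presented as a computable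
enumeration of axioms `(σ, n, b)`, meaning: if the oracle answers the queries
recorded in `σ` as `σ` prescribes, then the machine halts on input `n` with
output `b`.  Oracle queries are made in parallel, so with a partial oracle the
machine halts on `n` iff some axiom for `n` is answered by the partial oracle.
Determinism of the machine is reflected in the requirement that axioms with
compatible query answers give equal outputs. -/
structure TuringFunctional where
  axs : ℕ → Option (FinInfo × ℕ × Bool)
  axs_computable : Computable axs
  consistent : ∀ k₁ k₂ σ₁ σ₂ n b₁ b₂, axs k₁ = some (σ₁, n, b₁) →
    axs k₂ = some (σ₂, n, b₂) → σ₁.Compatible σ₂ → b₁ = b₂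

namespace TuringFunctional

/-- `Φ^C(n)` halts with output `b` (total oracle `C`). -/
def HaltsT (Φ : TuringFunctional) (C : Set ℕ) (n : ℕ) (b : Bool) : Prop :=
  ∃ k σ, Φ.axs k = some (σ, n, b) ∧ AgreesSet σ C

/-- `Φ^g(n)` halts with output `b` (partial oracle `g`). -/
def HaltsP (Φ : TuringFunctional) (g : ℕ →. Bool) (n : ℕ) (b : Bool) : Prop :=
  ∃ k σ, Φ.axs k = some (σ, n, b) ∧ AgreesPart σ g

/-- `Φ^C` is total. -/
def TotalOn (Φ : TuringFunctional) (C : Set ℕ) : Prop := ∀ n, ∃ b, Φ.HaltsT C n b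

/-- The set `{n : Φ^C(n) = B(n)}` on which `Φ^C` halts and agrees with the
characteristic function of `B`. -/
def AgreeSet (Φ : TuringFunctional) (C B : Set ℕ) : Set ℕ :=
  {n | ∃ b, Φ.HaltsT C n b ∧ (b = true ↔ n ∈ B)}

/-- `Φ^A = B`: with oracle `A`, `Φ` is total and computes the characteristic
function of `B`. -/
def FunEq (Φ : TuringFunctional) (A B : Set ℕ) : Prop :=
  Φ.TotalOn A ∧ ∀ n b, Φ.HaltsT A n b → (b = true ↔ n ∈ B)

/-- `Φ^g ≃ B`: every halting output of `Φ` with partial oracle `g` agrees with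
the characteristic function of `B`. -/
def PAgrees (Φ : TuringFunctional) (g : ℕ →. Bool) (B : Set ℕ) : Prop :=
  ∀ n b, Φ.HaltsP g n b → (b = true ↔ n ∈ B)

/-- The domain of `Φ^g`. -/
def PDomain (Φ : TuringFunctional) (g : ℕ →. Bool) : Set ℕ :=
  {n | ∃ b, Φ.HaltsP g n b}

/-- The axiom with index `k` applies to oracle `C` on input `n`. -/
def AppliesAt (Φ : TuringFunctional) (C : Set ℕ) (n k : ℕ) : Prop :=
  ∃ σ b, Φ.axs k = some (σ, n, b) ∧ AgreesSet σ C

/-- The (halting) computation of `Φ^C(n)` queries the oracle bit `C(m)`: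
the first axiom in the enumeration that applies to `C` on input `n`
records an answer to a query at position `m`. -/
def QueriesAt (Φ : TuringFunctional) (C : Set ℕ) (n m : ℕ) : Prop :=
  ∃ k σ b, Φ.axs k = some (σ, n, b) ∧ AgreesSet σ C ∧
    (∀ k' < k, ¬ Φ.AppliesAt C n k') ∧ ∃ p ∈ σ, p.1 = m

end TuringFunctional

/-- `D ⊆ ℕ` has (asymptotic) density 1. -/
def DensityOne (D : Set ℕ) : Prop :=
  Filter.Tendsto (fun n : ℕ => ((D ∩ Set.Iio n).ncard : ℝ) / n) Filter.atTop (nhds 1)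

/-- `B ≤₁ A`: 1-reducibility. -/
def OneRed (B A : Set ℕ) : Prop :=
  ∃ f : ℕ → ℕ, Computable f ∧ Function.Injective f ∧ ∀ n, n ∈ B ↔ f n ∈ A

/-- `B ≤_T A`: Turing reducibility. -/
def TuringRed (B A : Set ℕ) : Prop :=
  ∃ Φ : TuringFunctional, Φ.FunEq A B

/-- `B ≤_mr A`: mod-recursive reducibility. -/
def ModRecRed (B A : Set ℕ) : Prop :=
  ∃ Φ : TuringFunctional, Φ.FunEq A B ∧
    ∀ C : Set ℕ, ComputablePred (fun n => (n ∈ C ↔ n ∈ A)) →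
      Φ.TotalOn C ∧ ComputablePred (fun n => n ∈ Φ.AgreeSet C B)

/-- `B ≤_mf A`: mod-finite reducibility. -/
def ModFinRed (B A : Set ℕ) : Prop :=
  ∃ Φ : TuringFunctional, Φ.FunEq A B ∧
    ∀ C : Set ℕ, {n | ¬ (n ∈ C ↔ n ∈ A)}.Finite →
      Φ.TotalOn C ∧ (Φ.AgreeSet C B)ᶜ.Finite

/-- `B ≤_cor A`: coarse reducibility. -/
def CoarseRed (B A : Set ℕ) : Prop :=
  ∃ Φ : TuringFunctional,
    ∀ C : Set ℕ, DensityOne {n | n ∈ C ↔ n ∈ A} →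
      Φ.TotalOn C ∧ DensityOne (Φ.AgreeSet C B)

/-- `B ≤_cf A`: cofinite reducibility. -/
def CofinRed (B A : Set ℕ) : Prop :=
  ∃ Φ : TuringFunctional, Φ.FunEq A B ∧
    ∀ g : ℕ →. Bool, IsPartialOracle g A → (pDom g)ᶜ.Finite →
      Φ.PAgrees g B ∧ (Φ.PDomain g)ᶜ.Finite

/-- `B ≤_g A`: generic reducibility. -/
def GenericRed (B A : Set ℕ) : Prop :=
  ∃ Φ : TuringFunctional, Φ.FunEq A B ∧
    ∀ g : ℕ →. Bool, IsPartialOracle g A → DensityOne (pDom g) →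
      Φ.PAgrees g B ∧ DensityOne (Φ.PDomain g)

/-- `B ≤_ii A`: infinite-information reducibility. -/
def IIRed (B A : Set ℕ) : Prop :=
  ∃ Φ : TuringFunctional,
    ∀ g : ℕ →. Bool, IsPartialOracle g A → (pDom g).Infinite →
      Φ.PAgrees g B ∧ (Φ.PDomain g).Infinite

/-- `B ≤_ubfb A`: use-bounded-from-below reducibility. -/
def UbfbRed (B A : Set ℕ) : Prop :=
  ∃ Φ : TuringFunctional, Φ.FunEq A B ∧
    ∀ m : ℕ, ∀ᶠ n in Filter.atTop, ¬ Φ.QueriesAt A n m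

/-- `R(S) = {2^n · m : n ∈ S, m odd}`. -/
def Rmap (S : Set ℕ) : Set ℕ :=
  {x | ∃ n ∈ S, ∃ m : ℕ, Odd m ∧ x = 2 ^ n * m}

/-- `R̃(S) = {2^n + m : n ∈ S, m < 2^n}`. -/
def Rtilde (S : Set ℕ) : Set ℕ :=
  {x | ∃ n ∈ S, ∃ m : ℕ, m < 2 ^ n ∧ x = 2 ^ n + m}

/-- The Turing join `A ⊕ B`. -/
def turingJoin (A B : Set ℕ) : Set ℕ :=
  {x | (∃ n ∈ A, x = 2 * n) ∨ (∃ n ∈ B, x = 2 * n + 1)}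


/-! ### Auxiliary development for the proof -/

section Aux

open Filter Set

/-- Basic counting: `Set.Iio n` in `ℕ` has `n` elements. -/
lemma aux_ncard_Iio (n : ℕ) : (Set.Iio n : Set ℕ).ncard = n := by
  rw [← Finset.coe_Iio, Set.ncard_coe_finset, Nat.card_Iio]

lemma aux_partition (S : Set ℕ) (n : ℕ) :
    (S ∩ Set.Iio n).ncard + (Sᶜ ∩ Set.Iio n).ncard = n := by
  have hdisj : Disjoint (S ∩ Set.Iio n) (Sᶜ ∩ Set.Iio n) := by
    rw [Set.disjoint_left]
    rintro a ⟨h1, -⟩ ⟨h2, -⟩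
    exact h2 h1
  have hu : (S ∩ Set.Iio n) ∪ (Sᶜ ∩ Set.Iio n) = Set.Iio n := by
    ext a
    by_cases h : a ∈ S <;> simp [h]
  rw [← Set.ncard_union_eq hdisj ((Set.finite_Iio n).inter_of_right _)
    ((Set.finite_Iio n).inter_of_right _), hu, aux_ncard_Iio]

/-- Monotonicity of density-one. -/
lemma aux_densityOne_mono {D D' : Set ℕ} (hsub : D ⊆ D') (h : DensityOne D) :
    DensityOne D' := by
  refine tendsto_of_tendsto_of_tendsto_of_le_of_le' h tendsto_const_nhds ?_ ?_
  · filter_upwards [eventually_gt_atTop 0] with n hn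
    have hle : (D ∩ Set.Iio n).ncard ≤ (D' ∩ Set.Iio n).ncard :=
      Set.ncard_le_ncard (Set.inter_subset_inter_left _ hsub)
        ((Set.finite_Iio n).inter_of_right _)
    exact div_le_div_of_nonneg_right (by exact_mod_cast hle) (by positivity)
  · filter_upwards [eventually_gt_atTop 0] with n hn
    rw [div_le_one (by exact_mod_cast hn)]
    have : (D' ∩ Set.Iio n).ncard ≤ (Set.Iio n : Set ℕ).ncard :=
      Set.ncard_le_ncard Set.inter_subset_right (Set.finite_Iio n)
    rw [aux_ncard_Iio] at this
    exact_mod_cast this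

open Nat.Partrec (Code)

/-- The (classically defined) axiom enumeration coded by `e`. -/
noncomputable def axsC (e : ℕ) : ℕ → Option (FinInfo × ℕ × Bool) := fun k =>
  @dite _ ((Denumerable.ofNat Code e).eval k).Dom (Classical.dec _)
    (fun h => (Encodable.decode (α := Option (FinInfo × ℕ × Bool))
      (((Denumerable.ofNat Code e).eval k).get h)).getD none)
    (fun _ => none)

/-- Halting of the coded functional with the empty oracle. -/
def HsT (e n : ℕ) (b : Bool) : Prop :=
  ∃ k σ, axsC e k = some (σ, n, b) ∧ AgreesSet σ (∅ : Set ℕ)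

/-- A classically chosen output of the coded functional with empty oracle. -/
noncomputable def Fdef (e n : ℕ) : Bool :=
  @dite _ (∃ b, HsT e n b) (Classical.dec _) (fun h => h.choose) (fun _ => false)

lemma Fdef_spec {e n : ℕ} (h : ∃ b, HsT e n b) : HsT e n (Fdef e n) := by
  rw [Fdef, dif_pos h]
  exact h.choose_spec

/-- Every Turing functional's axiom enumeration is coded by some `e`. -/
lemma exists_code_axs (Φ : TuringFunctional) : ∃ e : ℕ, ∀ k, axsC e k = Φ.axs k := by
  have h2 : Nat.Partrec fun n => Part.bind (Encodable.decode (α := ℕ) n)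
      fun a => ((Φ.axs a : Part (Option (FinInfo × ℕ × Bool)))).map Encodable.encode :=
    Φ.axs_computable
  obtain ⟨c, hc⟩ := Nat.Partrec.Code.exists_code.1 h2
  refine ⟨Encodable.encode c, fun k => ?_⟩
  have heval : (Denumerable.ofNat Code (Encodable.encode c)).eval k =
      Part.some (Encodable.encode (Φ.axs k)) := by
    rw [Denumerable.ofNat_encode, hc]
    simp
  have hd : ((Denumerable.ofNat Code (Encodable.encode c)).eval k).Dom := by
    rw [heval]; trivial
  have hget : ((Denumerable.ofNat Code (Encodable.encode c)).eval k).get hd =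
      Encodable.encode (Φ.axs k) := by
    exact Part.mem_unique (Part.get_mem hd) (Part.eq_some_iff.mp heval)
  rw [axsC, dif_pos hd, hget, Encodable.encodek]
  rfl

/-- The block index of `n`: the `j` with `j! ≤ n < (j+1)!`. -/
def blk (n : ℕ) : ℕ := Nat.findGreatest (fun j => Nat.factorial j ≤ n) n

lemma blk_eq {j n : ℕ} (h1 : j.factorial ≤ n) (h2 : n < (j + 1).factorial) :
    blk n = j := by
  rw [blk, Nat.findGreatest_eq_iff]
  refine ⟨le_trans (Nat.self_le_factorial j) h1, fun _ => h1, fun k hk hkn hfk => ?_⟩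
  exact absurd (lt_of_lt_of_le h2 (Nat.factorial_le hk)) (not_lt.mpr hfk)

/-- The diagonal set. -/
def Bdiag : Set ℕ := {n | Fdef (Nat.unpair (blk n)).1 n = false}

/-- The diagonalization: no coded function agrees with `Bdiag` on a set of density 1. -/
lemma not_densityOne_agree (e : ℕ) :
    ¬ DensityOne {n | Fdef e n = true ↔ n ∈ Bdiag} := by
  intro hD
  set D : Set ℕ := {n | Fdef e n = true ↔ n ∈ Bdiag} with hDdef
  -- on blocks assigned to `e`, `D` is empty
  have key : ∀ i, (D ∩ Set.Iio ((Nat.pair e i + 1).factorial)).ncard ≤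
      (Nat.pair e i).factorial := by
    intro i
    set j := Nat.pair e i with hj
    have hsub : D ∩ Set.Iio ((j + 1).factorial) ⊆ Set.Iio j.factorial := by
      rintro n ⟨hnD, hnlt⟩
      by_contra hge
      have hblk : blk n = j := blk_eq (not_lt.mp hge) hnlt
      have hBn : n ∈ Bdiag ↔ Fdef e n = false := by
        rw [Bdiag]
        simp only [Set.mem_setOf_eq, hblk, hj, Nat.unpair_pair]
      have hnD' : Fdef e n = true ↔ n ∈ Bdiag := hnD
      rw [hBn] at hnD'
      rcases Bool.eq_false_or_eq_true (Fdef e n) with h | h <;> simp [h] at hnD'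
    calc (D ∩ Set.Iio ((j + 1).factorial)).ncard
        ≤ (Set.Iio j.factorial : Set ℕ).ncard :=
          Set.ncard_le_ncard hsub (Set.finite_Iio _)
      _ = j.factorial := aux_ncard_Iio _
  -- subsequence along blocks assigned to `e`
  have hmono : Tendsto (fun i => (Nat.pair e i + 1).factorial) atTop atTop := by
    apply tendsto_atTop_mono (fun i => ?_) tendsto_id
    calc (i : ℕ) ≤ Nat.pair e i := Nat.right_le_pair e i
      _ ≤ Nat.pair e i + 1 := Nat.le_succ _
      _ ≤ (Nat.pair e i + 1).factorial := Nat.self_le_factorial _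
  have h1 : Tendsto (fun i => ((D ∩ Set.Iio ((Nat.pair e i + 1).factorial)).ncard : ℝ) /
      ((Nat.pair e i + 1).factorial : ℕ)) atTop (nhds 1) := hD.comp hmono
  have h0 : Tendsto (fun i => ((D ∩ Set.Iio ((Nat.pair e i + 1).factorial)).ncard : ℝ) /
      ((Nat.pair e i + 1).factorial : ℕ)) atTop (nhds 0) := by
    refine tendsto_of_tendsto_of_tendsto_of_le_of_le' tendsto_const_nhds
      tendsto_one_div_add_atTop_nhds_zero_nat
      (Eventually.of_forall fun i => by positivity)
      (Eventually.of_forall fun i => ?_)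
    set j := Nat.pair e i with hj
    have hfacpos : (0:ℝ) < (j.factorial : ℝ) := by exact_mod_cast j.factorial_pos
    have hfacpos' : (0:ℝ) < ((j + 1).factorial : ℝ) := by exact_mod_cast (j+1).factorial_pos
    calc ((D ∩ Set.Iio ((j + 1).factorial)).ncard : ℝ) / ((j + 1).factorial : ℕ)
        ≤ (j.factorial : ℝ) / ((j + 1).factorial : ℕ) := by
          apply div_le_div_of_nonneg_right ?_ hfacpos'.le
          exact_mod_cast key i
      _ = 1 / (j + 1 : ℝ) := by
          have hfs : ((j + 1).factorial : ℝ) = ((j : ℝ) + 1) * (j.factorial : ℝ) := by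
            rw [Nat.factorial_succ]; push_cast; ring
          rw [hfs, mul_comm, ← div_div, div_self hfacpos.ne']
      _ ≤ 1 / (i + 1 : ℝ) := by
          apply one_div_le_one_div_of_le (by positivity)
          have hij : i ≤ j := Nat.right_le_pair e i
          have : (i : ℝ) ≤ (j : ℝ) := by exact_mod_cast hij
          linarith
  have := tendsto_nhds_unique h1 h0
  norm_num at this

end Aux

theorem exists_one_red_not_coarse_red :
    ∃ A B : Set ℕ, OneRed B A ∧ ¬ CoarseRed B A := by
  classical
  set A : Set ℕ := {m | ∃ n ∈ Bdiag, m = n * n} with hA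
  refine ⟨A, Bdiag, ⟨fun n => n * n, ?_, ?_, ?_⟩, ?_⟩
  · exact Primrec.to_comp (Primrec.nat_mul.comp Primrec.id Primrec.id)
  · intro a b h
    exact Nat.mul_self_inj.mp h
  · intro n
    constructor
    · intro hn; exact ⟨n, hn, rfl⟩
    · rintro ⟨n', hn', hEq⟩
      rwa [Nat.mul_self_inj.mp hEq.symm] at hn'
  · rintro ⟨Φ, hΦ⟩
    -- use the empty oracle, which agrees with `A` on a set of density 1
    have hAcount : ∀ n : ℕ, (A ∩ Set.Iio n).ncard ≤ Nat.sqrt n + 1 := by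
      intro n
      have hsub : A ∩ Set.Iio n ⊆ (fun k => k * k) '' Set.Iio (Nat.sqrt n + 1) := by
        rintro m ⟨⟨k, -, rfl⟩, hmlt⟩
        refine ⟨k, ?_, rfl⟩
        have : k ≤ Nat.sqrt n := Nat.le_sqrt.mpr (le_of_lt hmlt)
        exact Nat.lt_succ_of_le this
      calc (A ∩ Set.Iio n).ncard
          ≤ ((fun k => k * k) '' Set.Iio (Nat.sqrt n + 1)).ncard :=
            Set.ncard_le_ncard hsub ((Set.finite_Iio _).image _)
        _ ≤ (Set.Iio (Nat.sqrt n + 1) : Set ℕ).ncard :=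
            Set.ncard_image_le (Set.finite_Iio _)
        _ = Nat.sqrt n + 1 := aux_ncard_Iio _
    have hsqrtTendsto : Tendsto Real.sqrt atTop atTop := by
      rw [tendsto_atTop_atTop]
      intro b
      refine ⟨(max b 0) ^ 2, fun a ha => ?_⟩
      calc b ≤ max b 0 := le_max_left _ _
        _ = Real.sqrt ((max b 0) ^ 2) := (Real.sqrt_sq (le_max_right _ _)).symm
        _ ≤ Real.sqrt a := Real.sqrt_le_sqrt ha
    have hsqrtdiv : Tendsto (fun x : ℝ => (Real.sqrt x + 1) / x) atTop (nhds 0) := by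
      have h1 : Tendsto (fun x : ℝ => 1 / Real.sqrt x) atTop (nhds 0) := by
        exact hsqrtTendsto.inv_tendsto_atTop.congr (fun x => by simp [one_div, Pi.inv_apply])
      have h2 : Tendsto (fun x : ℝ => 1 / x) atTop (nhds (0 : ℝ)) := by
        simpa [one_div] using tendsto_inv_atTop_zero (𝕜 := ℝ)
      have h3 := h1.add h2
      rw [add_zero] at h3
      apply h3.congr'
      filter_upwards [eventually_gt_atTop (0 : ℝ)] with x hx
      rw [← Real.sqrt_div_self']
      ring
    have hratio : Tendsto (fun n : ℕ => ((A ∩ Set.Iio n).ncard : ℝ) / n) atTop (nhds 0) := by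
      refine tendsto_of_tendsto_of_tendsto_of_le_of_le' tendsto_const_nhds
        (hsqrtdiv.comp tendsto_natCast_atTop_atTop)
        (Eventually.of_forall fun n => by positivity) ?_
      filter_upwards [eventually_gt_atTop 0] with n hn
      have hnpos : (0:ℝ) < (n:ℝ) := by exact_mod_cast hn
      apply div_le_div_of_nonneg_right ?_ hnpos.le
      calc ((A ∩ Set.Iio n).ncard : ℝ) ≤ ((Nat.sqrt n : ℝ) + 1) := by
            exact_mod_cast hAcount n
        _ ≤ Real.sqrt (n : ℝ) + 1 := by
            have : ((Nat.sqrt n : ℝ)) ≤ Real.sqrt (n : ℝ) := by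
              rw [show ((n : ℕ) : ℝ) = ((n : ℕ) : ℝ) from rfl]
              refine (Real.le_sqrt (by positivity) (by positivity)).mpr ?_
              exact_mod_cast Nat.sqrt_le' n
            linarith
    have hAc : DensityOne {n | n ∈ (∅ : Set ℕ) ↔ n ∈ A} := by
      have hset : {n | n ∈ (∅ : Set ℕ) ↔ n ∈ A} = Aᶜ := by
        ext a; simp [Set.mem_setOf_eq]
      rw [hset, DensityOne]
      have hEq : (fun n : ℕ => ((Aᶜ ∩ Set.Iio n).ncard : ℝ) / n) =ᶠ[atTop]
          (fun n : ℕ => 1 - ((A ∩ Set.Iio n).ncard : ℝ) / n) := by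
        filter_upwards [eventually_gt_atTop 0] with n hn
        have hpar := aux_partition A n
        have hnpos : (0:ℝ) < (n:ℝ) := by exact_mod_cast hn
        have : ((Aᶜ ∩ Set.Iio n).ncard : ℝ) = (n : ℝ) - ((A ∩ Set.Iio n).ncard : ℝ) := by
          have := congrArg (fun x : ℕ => (x : ℝ)) hpar
          push_cast at this
          linarith
        rw [this]
        field_simp
      refine Tendsto.congr' hEq.symm ?_
      have := (tendsto_const_nhds (x := (1:ℝ)) (f := atTop (α := ℕ))).sub hratio
      rw [sub_zero] at this
      exact this
    obtain ⟨-, hagree⟩ := hΦ ∅ hAc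
    obtain ⟨e, he⟩ := exists_code_axs Φ
    -- the agreement set is contained in the diagonal set for `e`
    have hsub : Φ.AgreeSet ∅ Bdiag ⊆ {n | Fdef e n = true ↔ n ∈ Bdiag} := by
      rintro n ⟨b, ⟨k, σ, hax, hag⟩, hb⟩
      have hHsT : HsT e n b := ⟨k, σ, by rw [he k]; exact hax, hag⟩
      have hF := Fdef_spec ⟨b, hHsT⟩
      obtain ⟨k', σ', hax', hag'⟩ := hF
      have hcompat : σ'.Compatible σ := by
        intro p hp q hq hpq
        have hp2 : p.2 = false := by
          have := hag' p hp
          simpa [AgreesSet] using this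
        have hq2 : q.2 = false := by
          have := hag q hq
          simpa [AgreesSet] using this
        rw [hp2, hq2]
      have hax'' : Φ.axs k' = some (σ', n, Fdef e n) := by rw [← he k']; exact hax'
      have hFb : Fdef e n = b := Φ.consistent k' k σ' σ n _ _ hax'' hax hcompat
      show Fdef e n = true ↔ n ∈ Bdiag
      rw [hFb]
      exact hb
    exact not_densityOne_agree e (aux_densityOne_mono hsub hagree)
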